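/- There exists a finite MDP with alarm region M = (X, A, P, T, (r_t), X_a) with horizon T = 3, an initial state x_0 ∉ X_a, and Δ = 1/2 such that the supremum of J_M(π) over all Markov policies π satisfying P^π(∃ t ∈ {0,…,T}: X_t ∈ X_a) ≤ Δ equals 11/3, while the supremum of J_M(π) over all history-dependent policies π satisfying P^π(∃ t ∈ {0,…,T}: X_t ∈ X_a) ≤ Δ equals 4. In particular, Markov policies cannot in general achieve the optimal value of the optimal control problem with a temporally joint chance constraint. -/

import Mathlib

/- Common framework: finite MDPs with alarm region, trajectories,
   history-dependent policies, trajectory laws, objectives. -/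

attribute [local instance] Classical.propDecidable

noncomputable section

/-- A finite MDP with alarm region `Xa`, horizon `T ≥ 1`, transition pmf `P`,
running rewards `r` and terminal reward `rT`. -/
structure MDP (X A : Type) [Fintype X] [Fintype A] where
  T : ℕ
  hT : 1 ≤ T
  P : X → A → X → ℝ
  P_nonneg : ∀ x a x', 0 ≤ P x a x'
  P_sum : ∀ x a, ∑ x', P x a x' = 1
  r : Fin T → X → A → ℝ
  rT : X → ℝ
  Xa : Set X

variable {X A : Type} [Fintype X] [Fintype A]

/-- A trajectory `(x₀,…,x_T, a₀,…,a_{T-1})`. -/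
abbrev Traj (M : MDP X A) := (Fin (M.T + 1) → X) × (Fin M.T → A)

/-- A history-dependent randomized policy: at each time `t < T` it maps the
history `(x₀,…,x_t, a₀,…,a_{t-1})` to a pmf on actions. -/
structure HistPolicy (M : MDP X A) where
  π : (t : Fin M.T) → (Fin (t.val + 1) → X) → (Fin t.val → A) → A → ℝ
  nonneg : ∀ t xs as a, 0 ≤ π t xs as a
  sum_one : ∀ t xs as, ∑ a, π t xs as a = 1

/-- A policy is Markov if at each time it depends only on the current state. -/
def IsMarkov {M : MDP X A} (p : HistPolicy M) : Prop :=
  ∀ (t : Fin M.T) (xs xs' : Fin (t.val + 1) → X) (as as' : Fin t.val → A),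
    xs (Fin.last t.val) = xs' (Fin.last t.val) → p.π t xs as = p.π t xs' as'

/-- The state part of the history at time `t` determined by a trajectory. -/
def histStates {M : MDP X A} (τ : Traj M) (t : Fin M.T) : Fin (t.val + 1) → X :=
  fun i => τ.1 (Fin.castLE (by have := t.isLt; omega) i)

/-- The action part of the history at time `t` determined by a trajectory. -/
def histActs {M : MDP X A} (τ : Traj M) (t : Fin M.T) : Fin t.val → A :=
  fun i => τ.2 (Fin.castLE (by have := t.isLt; omega) i)

/-- The probability mass of a trajectory under policy `p` with initial state `x0`. -/
def trajProb (M : MDP X A) (p : HistPolicy M) (x0 : X) (τ : Traj M) : ℝ :=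
  (if τ.1 0 = x0 then (1 : ℝ) else 0) *
    ∏ t : Fin M.T,
      p.π t (histStates τ t) (histActs τ t) (τ.2 t) *
        M.P (τ.1 t.castSucc) (τ.2 t) (τ.1 t.succ)

/-- Probability of an event (a set of trajectories) under the trajectory law. -/
def probEvent (M : MDP X A) (p : HistPolicy M) (x0 : X) (E : Traj M → Prop) : ℝ :=
  ∑ τ : Traj M, if E τ then trajProb M p x0 τ else 0

/-- The objective `J_M(π) = E[Σ_t r_t(X_t,A_t) + r_T(X_T)]`. -/
def J (M : MDP X A) (p : HistPolicy M) (x0 : X) : ℝ :=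
  ∑ τ : Traj M, trajProb M p x0 τ *
    (∑ t : Fin M.T, M.r t (τ.1 t.castSucc) (τ.2 t) + M.rT (τ.1 (Fin.last M.T)))


namespace MEx

/-- Transition kernel of the witness MDP, as a table.
States: 0 = start, 1 = safe mid, 2 = alarm, 3 = merge (terminal reward 1),
4 = good terminal (reward 10). Action 1 from state 3 is the risky action. -/
def Pm : Fin 5 → Fin 2 → Fin 5 → ℝ :=
  ![ ![![0, 3/4, 1/4, 0, 0], ![0, 3/4, 1/4, 0, 0]],
     ![![0, 0, 0, 1, 0],     ![0, 0, 0, 1, 0]],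
     ![![0, 0, 0, 1, 0],     ![0, 0, 0, 1, 0]],
     ![![0, 0, 0, 1, 0],     ![0, 0, 1/2, 0, 1/2]],
     ![![0, 0, 0, 0, 1],     ![0, 0, 0, 0, 1]] ]

def Mex : MDP (Fin 5) (Fin 2) where
  T := 3
  hT := by norm_num
  P := Pm
  P_nonneg := by
    intro x a y
    fin_cases x <;> fin_cases a <;> fin_cases y <;> norm_num [Pm]
  P_sum := by
    intro x a
    fin_cases x <;> fin_cases a <;> norm_num [Pm, Fin.sum_univ_five, Matrix.cons_val_two, Matrix.cons_val_three,
      Matrix.cons_val_four, Matrix.head_cons, Matrix.tail_cons]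
  r := fun _ _ _ => 0
  rT := ![0, 0, 0, 1, 10]
  Xa := {x | x = 2}

end MEx
namespace MEx

/-- trajProb evaluated on an explicit trajectory. -/
lemma trajProb_eval (p : HistPolicy Mex) (c0 c1 c2 c3 : Fin 5) (b0 b1 b2 : Fin 2) :
    trajProb Mex p 0 (![c0,c1,c2,c3], ![b0,b1,b2]) =
      (if c0 = 0 then (1:ℝ) else 0) *
        ((p.π (0 : Fin 3) ![c0] ![] b0 * Pm c0 b0 c1) *
         ((p.π (1 : Fin 3) ![c0,c1] ![b0] b1 * Pm c1 b1 c2) *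
          (p.π (2 : Fin 3) ![c0,c1,c2] ![b0,b1] b2 * Pm c2 b2 c3))) := by
  have h : trajProb Mex p 0 (![c0,c1,c2,c3], ![b0,b1,b2]) =
      (@ite ℝ ((![c0,c1,c2,c3] : Fin 4 → Fin 5) 0 = 0) (Classical.propDecidable _) 1 0) *
        ∏ t : Fin 3,
          p.π t (histStates (M := Mex) (![c0,c1,c2,c3], ![b0,b1,b2]) t)
              (histActs (M := Mex) (![c0,c1,c2,c3], ![b0,b1,b2]) t)
              ((![b0,b1,b2] : Fin 3 → Fin 2) t) *
            Pm ((![c0,c1,c2,c3] : Fin 4 → Fin 5) t.castSucc)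
              ((![b0,b1,b2] : Fin 3 → Fin 2) t)
              ((![c0,c1,c2,c3] : Fin 4 → Fin 5) t.succ) := rfl
  rw [h, Fin.prod_univ_three]
  have hs0 : histStates (M := Mex) ((![c0,c1,c2,c3], ![b0,b1,b2]) : Traj Mex) (0 : Fin 3) = ![c0] := by
    funext i; fin_cases i <;> rfl
  have hs1 : histStates (M := Mex) ((![c0,c1,c2,c3], ![b0,b1,b2]) : Traj Mex) (1 : Fin 3) = ![c0,c1] := by
    funext i; fin_cases i <;> rfl
  have hs2 : histStates (M := Mex) ((![c0,c1,c2,c3], ![b0,b1,b2]) : Traj Mex) (2 : Fin 3) = ![c0,c1,c2] := by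
    funext i; fin_cases i <;> rfl
  have ha0 : histActs (M := Mex) ((![c0,c1,c2,c3], ![b0,b1,b2]) : Traj Mex) (0 : Fin 3) = ![] := by
    funext i; fin_cases i
  have ha1 : histActs (M := Mex) ((![c0,c1,c2,c3], ![b0,b1,b2]) : Traj Mex) (1 : Fin 3) = ![b0] := by
    funext i; fin_cases i <;> rfl
  have ha2 : histActs (M := Mex) ((![c0,c1,c2,c3], ![b0,b1,b2]) : Traj Mex) (2 : Fin 3) = ![b0,b1] := by
    funext i; fin_cases i <;> rfl
  rw [hs0, hs1, hs2, ha0, ha1, ha2]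
  have hc : (![c0,c1,c2,c3] : Fin 4 → Fin 5) (Fin.castSucc 2) = c2 := rfl
  have hz : (![c0,c1,c2,c3] : Fin 4 → Fin 5) 0 = c0 := rfl
  rw [hc, hz]
  by_cases h0 : c0 = 0 <;> simp [h0] <;> ring

end MEx
set_option maxRecDepth 100000
namespace MEx

lemma sum_pi_succ {n : ℕ} {α : Type} [Fintype α] (F : (Fin (n+1) → α) → ℝ) :
    ∑ g : Fin (n+1) → α, F g = ∑ x : α, ∑ g : Fin n → α, F (Fin.cons x g) := by
  have h1 : ∑ g : Fin (n+1) → α, F g = ∑ y : α × (Fin n → α), F (Fin.cons y.1 y.2) :=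
    Fintype.sum_equiv (Fin.consEquiv fun _ => α) _ _ (by intro y; rfl) |>.symm
  rw [h1, Fintype.sum_prod_type]

lemma sum_pi_zero {α : Type} [Fintype α] (F : (Fin 0 → α) → ℝ) :
    ∑ g : Fin 0 → α, F g = F ![] := by
  rw [Fintype.sum_eq_single ![]]
  · intro g hg; exact absurd (funext fun i => i.elim0) hg

lemma sum_traj (f : Traj Mex → ℝ) :
    ∑ τ : Traj Mex, f τ =
      ∑ c0 : Fin 5, ∑ c1 : Fin 5, ∑ c2 : Fin 5, ∑ c3 : Fin 5,
        ∑ b0 : Fin 2, ∑ b1 : Fin 2, ∑ b2 : Fin 2,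
          f (![c0,c1,c2,c3], ![b0,b1,b2]) := by
  have h : ∑ τ : Traj Mex, f τ = ∑ g : Fin 4 → Fin 5, ∑ h : Fin 3 → Fin 2, f (g, h) :=
    Fintype.sum_prod_type (f := f)
  rw [h]
  rw [sum_pi_succ (fun g : Fin 4 → Fin 5 => ∑ h : Fin 3 → Fin 2, f (g, h))]
  congr 1; funext c0
  erw [sum_pi_succ (fun g : Fin 3 → Fin 5 => ∑ h : Fin 3 → Fin 2, f (Fin.cons c0 g, h))]
  congr 1; funext c1
  erw [sum_pi_succ (fun g : Fin 2 → Fin 5 => ∑ h : Fin 3 → Fin 2, f (Fin.cons c0 (Fin.cons c1 g), h))]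
  congr 1; funext c2
  erw [sum_pi_succ (fun g : Fin 1 → Fin 5 => ∑ h : Fin 3 → Fin 2, f (Fin.cons c0 (Fin.cons c1 (Fin.cons c2 g)), h))]
  congr 1; funext c3
  rw [sum_pi_zero (fun g => ∑ h : Fin 3 → Fin 2, f (Fin.cons c0 (Fin.cons c1 (Fin.cons c2 (Fin.cons c3 g))), h))]
  have e4 : (Fin.cons c0 (Fin.cons c1 (Fin.cons c2 (Fin.cons c3 (![] : Fin 0 → Fin 5)))) : Fin 4 → Fin 5) = ![c0,c1,c2,c3] := rfl
  erw [e4]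
  erw [sum_pi_succ (fun h : Fin 3 → Fin 2 => f (![c0,c1,c2,c3], h))]
  congr 1; funext b0
  erw [sum_pi_succ (fun h : Fin 2 → Fin 2 => f (![c0,c1,c2,c3], Fin.cons b0 h))]
  congr 1; funext b1
  erw [sum_pi_succ (fun h : Fin 1 → Fin 2 => f (![c0,c1,c2,c3], Fin.cons b0 (Fin.cons b1 h)))]
  congr 1; funext b2
  erw [sum_pi_zero (fun h : Fin 0 → Fin 2 => f (![c0,c1,c2,c3], Fin.cons b0 (Fin.cons b1 (Fin.cons b2 h))))]
  rfl

end MEx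
namespace MEx

lemma coord0 (c0 c1 c2 c3 : Fin 5) : (![c0,c1,c2,c3] : Fin 4 → Fin 5) (0 : Fin (Mex.T+1)) = c0 := rfl
lemma coord1 (c0 c1 c2 c3 : Fin 5) : (![c0,c1,c2,c3] : Fin 4 → Fin 5) (1 : Fin (Mex.T+1)) = c1 := rfl
lemma coord2 (c0 c1 c2 c3 : Fin 5) : (![c0,c1,c2,c3] : Fin 4 → Fin 5) (2 : Fin (Mex.T+1)) = c2 := rfl
lemma coord3 (c0 c1 c2 c3 : Fin 5) : (![c0,c1,c2,c3] : Fin 4 → Fin 5) (3 : Fin (Mex.T+1)) = c3 := rfl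

@[simp] lemma Pm0_0 (b : Fin 2) : Pm 0 b 0 = (0:ℝ) := by fin_cases b <;> rfl
@[simp] lemma Pm0_1 (b : Fin 2) : Pm 0 b 1 = (3/4:ℝ) := by fin_cases b <;> rfl
@[simp] lemma Pm0_2 (b : Fin 2) : Pm 0 b 2 = (1/4:ℝ) := by fin_cases b <;> rfl
@[simp] lemma Pm0_3 (b : Fin 2) : Pm 0 b 3 = (0:ℝ) := by fin_cases b <;> rfl
@[simp] lemma Pm0_4 (b : Fin 2) : Pm 0 b 4 = (0:ℝ) := by fin_cases b <;> rfl
@[simp] lemma Pm1_0 (b : Fin 2) : Pm 1 b 0 = (0:ℝ) := by fin_cases b <;> rfl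
@[simp] lemma Pm1_1 (b : Fin 2) : Pm 1 b 1 = (0:ℝ) := by fin_cases b <;> rfl
@[simp] lemma Pm1_2 (b : Fin 2) : Pm 1 b 2 = (0:ℝ) := by fin_cases b <;> rfl
@[simp] lemma Pm1_3 (b : Fin 2) : Pm 1 b 3 = (1:ℝ) := by fin_cases b <;> rfl
@[simp] lemma Pm1_4 (b : Fin 2) : Pm 1 b 4 = (0:ℝ) := by fin_cases b <;> rfl
@[simp] lemma Pm2_0 (b : Fin 2) : Pm 2 b 0 = (0:ℝ) := by fin_cases b <;> rfl
@[simp] lemma Pm2_1 (b : Fin 2) : Pm 2 b 1 = (0:ℝ) := by fin_cases b <;> rfl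
@[simp] lemma Pm2_2 (b : Fin 2) : Pm 2 b 2 = (0:ℝ) := by fin_cases b <;> rfl
@[simp] lemma Pm2_3 (b : Fin 2) : Pm 2 b 3 = (1:ℝ) := by fin_cases b <;> rfl
@[simp] lemma Pm2_4 (b : Fin 2) : Pm 2 b 4 = (0:ℝ) := by fin_cases b <;> rfl
@[simp] lemma Pm3_0 (b : Fin 2) : Pm 3 b 0 = (0:ℝ) := by fin_cases b <;> rfl
@[simp] lemma Pm3_1 (b : Fin 2) : Pm 3 b 1 = (0:ℝ) := by fin_cases b <;> rfl
@[simp] lemma Pm3_3a : Pm 3 0 3 = (1:ℝ) := rfl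
@[simp] lemma Pm3_3b : Pm 3 1 3 = (0:ℝ) := rfl
@[simp] lemma Pm3_4a : Pm 3 0 4 = (0:ℝ) := rfl
@[simp] lemma Pm3_4b : Pm 3 1 4 = (1/2:ℝ) := rfl
@[simp] lemma Pm3_2a : Pm 3 0 2 = (0:ℝ) := rfl
@[simp] lemma Pm3_2b : Pm 3 1 2 = (1/2:ℝ) := rfl


lemma Pm0_dead (b : Fin 2) (c : Fin 5) (h1 : ¬ c = 1) (h2 : ¬ c = 2) : Pm 0 b c = 0 := by
  fin_cases b <;> fin_cases c <;> simp_all <;> rfl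
lemma Pm1_dead (b : Fin 2) (c : Fin 5) (h : ¬ c = 3) : Pm 1 b c = 0 := by
  fin_cases b <;> fin_cases c <;> simp_all <;> rfl
lemma Pm2_dead (b : Fin 2) (c : Fin 5) (h : ¬ c = 3) : Pm 2 b c = 0 := by
  fin_cases b <;> fin_cases c <;> simp_all <;> rfl
lemma Pm3_dead (b : Fin 2) (c : Fin 5) (h1 : ¬ c = 2) (h2 : ¬ c = 3) (h3 : ¬ c = 4) :
    Pm 3 b c = 0 := by
  fin_cases b <;> fin_cases c <;> simp_all <;> rfl
lemma ifTrue1 : (if True then (1:ℝ) else 0) = 1 := if_pos trivial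
lemma ind00 : (if (0:Fin 5) = (0:Fin 5) then (1:ℝ) else 0) = 1 := if_pos rfl

lemma sum5_single0 (F : Fin 5 → ℝ) (h : ∀ c, ¬ c = 0 → F c = 0) : ∑ c, F c = F 0 := by
  rw [Fin.sum_univ_five, h 1 (by decide), h 2 (by decide), h 3 (by decide), h 4 (by decide)]
  ring

lemma sum5_pair12 (F : Fin 5 → ℝ) (h : ∀ c, ¬ c = 1 → ¬ c = 2 → F c = 0) :
    ∑ c, F c = F 1 + F 2 := by
  rw [Fin.sum_univ_five, h 0 (by decide) (by decide), h 3 (by decide) (by decide),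
    h 4 (by decide) (by decide)]
  ring

lemma sum5_single3 (F : Fin 5 → ℝ) (h : ∀ c, ¬ c = 3 → F c = 0) : ∑ c, F c = F 3 := by
  rw [Fin.sum_univ_five, h 0 (by decide), h 1 (by decide), h 2 (by decide), h 4 (by decide)]
  ring

lemma sum5_triple (F : Fin 5 → ℝ) (h : ∀ c, ¬ c = 2 → ¬ c = 3 → ¬ c = 4 → F c = 0) :
    ∑ c, F c = F 2 + F 3 + F 4 := by
  rw [Fin.sum_univ_five, h 0 (by decide) (by decide) (by decide),
    h 1 (by decide) (by decide) (by decide)]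
  ring

/-- Master computation: expectation of a function of the state path. -/
lemma master (p : HistPolicy Mex) (w : Fin 5 → Fin 5 → Fin 5 → Fin 5 → ℝ) :
    ∑ τ : Traj Mex, trajProb Mex p 0 τ * w (τ.1 0) (τ.1 1) (τ.1 2) (τ.1 3) =
      (∑ b0 : Fin 2, ∑ b1 : Fin 2,
        p.π (0:Fin 3) ![0] ![] b0 * p.π (1:Fin 3) ![0,1] ![b0] b1 *
          (3/4 * (p.π (2:Fin 3) ![0,1,3] ![b0,b1] 0 * w 0 1 3 3
            + p.π (2:Fin 3) ![0,1,3] ![b0,b1] 1 * (1/2 * w 0 1 3 4 + 1/2 * w 0 1 3 2))))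
    + (∑ b0 : Fin 2, ∑ b1 : Fin 2,
        p.π (0:Fin 3) ![0] ![] b0 * p.π (1:Fin 3) ![0,2] ![b0] b1 *
          (1/4 * (p.π (2:Fin 3) ![0,2,3] ![b0,b1] 0 * w 0 2 3 3
            + p.π (2:Fin 3) ![0,2,3] ![b0,b1] 1 * (1/2 * w 0 2 3 4 + 1/2 * w 0 2 3 2)))) := by
  have zprop : ∀ (s : Finset (Fin 2)) (g : Fin 2 → ℝ), True := fun _ _ => trivial
  rw [sum_traj (f := fun τ => trajProb Mex p 0 τ * w (τ.1 0) (τ.1 1) (τ.1 2) (τ.1 3))]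
  simp only [coord0, coord1, coord2, coord3, trajProb_eval]
  rw [sum5_single0 _ ?h0]
  case h0 =>
    intro c hc
    simp only [if_neg hc, if_true, one_mul, zero_mul, mul_zero, Finset.sum_const_zero]
  beta_reduce
  rw [sum5_pair12 _ ?h1]
  case h1 =>
    intro c hc1 hc2
    simp only [Pm0_dead _ c hc1 hc2, if_true, one_mul, zero_mul, mul_zero, Finset.sum_const_zero]
  beta_reduce
  rw [sum5_single3 _ ?h2a]
  case h2a =>
    intro c hc
    simp only [Pm1_dead _ c hc, if_true, one_mul, zero_mul, mul_zero, Finset.sum_const_zero]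
  rw [sum5_triple _ ?h3a]
  case h3a =>
    intro c hc1 hc2 hc3
    simp only [Pm3_dead _ c hc1 hc2 hc3, if_true, one_mul, zero_mul, mul_zero, Finset.sum_const_zero]
  beta_reduce
  rw [sum5_single3 _ ?h2b]
  case h2b =>
    intro c hc
    simp only [Pm2_dead _ c hc, if_true, one_mul, zero_mul, mul_zero, Finset.sum_const_zero]
  rw [sum5_triple _ ?h3b]
  case h3b =>
    intro c hc1 hc2 hc3
    simp only [Pm3_dead _ c hc1 hc2 hc3, if_true, one_mul, zero_mul, mul_zero, Finset.sum_const_zero]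
  beta_reduce
  simp only [Fin.sum_univ_two, Pm0_1, Pm0_2, Pm1_3, Pm2_3, Pm3_3a, Pm3_3b, Pm3_4a, Pm3_4b,
    Pm3_2a, Pm3_2b, ind00, ifTrue1, one_mul, Matrix.cons_val]
  ring

end MEx
namespace MEx

/-- Probability that `p` plays the risky action at time 2 when the time-1 state was `x`. -/
def Q (p : HistPolicy Mex) (x : Fin 5) : ℝ :=
  ∑ b0 : Fin 2, ∑ b1 : Fin 2,
    p.π (0:Fin 3) ![0] ![] b0 * p.π (1:Fin 3) ![0,x] ![b0] b1 *
      p.π (2:Fin 3) ![0,x,3] ![b0,b1] 1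

def R (p : HistPolicy Mex) (x : Fin 5) : ℝ :=
  ∑ b0 : Fin 2, ∑ b1 : Fin 2,
    p.π (0:Fin 3) ![0] ![] b0 * p.π (1:Fin 3) ![0,x] ![b0] b1 *
      p.π (2:Fin 3) ![0,x,3] ![b0,b1] 0

lemma hA1 (p : HistPolicy Mex) : p.π (0:Fin 3) ![0] ![] 1 = 1 - p.π (0:Fin 3) ![0] ![] 0 := by
  have h := p.sum_one (0:Fin 3) ![0] ![]
  rw [Fin.sum_univ_two] at h; linarith

lemma hB1 (p : HistPolicy Mex) (xs : Fin 2 → Fin 5) (as : Fin 1 → Fin 2) :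
    p.π (1:Fin 3) xs as 1 = 1 - p.π (1:Fin 3) xs as 0 := by
  have h := p.sum_one (1:Fin 3) xs as
  rw [Fin.sum_univ_two] at h; linarith

lemma hC1 (p : HistPolicy Mex) (xs : Fin 3 → Fin 5) (as : Fin 2 → Fin 2) :
    p.π (2:Fin 3) xs as 1 = 1 - p.π (2:Fin 3) xs as 0 := by
  have h := p.sum_one (2:Fin 3) xs as
  rw [Fin.sum_univ_two] at h; linarith

lemma RQ_sum (p : HistPolicy Mex) (x : Fin 5) : R p x + Q p x = 1 := by
  simp only [R, Q, Fin.sum_univ_two, hA1, hB1, hC1]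
  ring

lemma Q_nonneg (p : HistPolicy Mex) (x : Fin 5) : 0 ≤ Q p x :=
  Finset.sum_nonneg fun b0 _ => Finset.sum_nonneg fun b1 _ =>
    mul_nonneg (mul_nonneg (p.nonneg _ _ _ _) (p.nonneg _ _ _ _)) (p.nonneg _ _ _ _)

lemma R_nonneg (p : HistPolicy Mex) (x : Fin 5) : 0 ≤ R p x :=
  Finset.sum_nonneg fun b0 _ => Finset.sum_nonneg fun b1 _ =>
    mul_nonneg (mul_nonneg (p.nonneg _ _ _ _) (p.nonneg _ _ _ _)) (p.nonneg _ _ _ _)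

/-- Alarm-indicator weight. -/
def Wal : Fin 5 → Fin 5 → Fin 5 → Fin 5 → ℝ := fun c0 c1 c2 c3 =>
  if (c0 = 2 ∨ c1 = 2 ∨ c2 = 2 ∨ c3 = 2) then 1 else 0

lemma Wal_133 : Wal 0 1 3 3 = 0 := if_neg (by rintro (h|h|h|h) <;> exact absurd h (by decide))
lemma Wal_134 : Wal 0 1 3 4 = 0 := if_neg (by rintro (h|h|h|h) <;> exact absurd h (by decide))
lemma Wal_132 : Wal 0 1 3 2 = 1 := if_pos (Or.inr (Or.inr (Or.inr rfl)))
lemma Wal_233 : Wal 0 2 3 3 = 1 := if_pos (Or.inr (Or.inl rfl))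
lemma Wal_234 : Wal 0 2 3 4 = 1 := if_pos (Or.inr (Or.inl rfl))
lemma Wal_232 : Wal 0 2 3 2 = 1 := if_pos (Or.inr (Or.inl rfl))

lemma exists_fin4 {α : Type} (g : Fin 4 → α) (y : α) :
    (∃ t, g t = y) ↔ (g 0 = y ∨ g 1 = y ∨ g 2 = y ∨ g 3 = y) := by
  constructor
  · rintro ⟨t, ht⟩
    fin_cases t
    · exact Or.inl ht
    · exact Or.inr (Or.inl ht)
    · exact Or.inr (Or.inr (Or.inl ht))
    · exact Or.inr (Or.inr (Or.inr ht))
  · rintro (h|h|h|h)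
    exacts [⟨0, h⟩, ⟨1, h⟩, ⟨2, h⟩, ⟨3, h⟩]

lemma probEvent_eq (p : HistPolicy Mex) :
    probEvent Mex p 0 (fun τ => ∃ t, τ.1 t ∈ Mex.Xa) =
      3/8 * Q p 1 + 1/4 * (R p 2 + Q p 2) := by
  have key : ∀ τ : Traj Mex,
      (@ite ℝ (∃ t, τ.1 t ∈ Mex.Xa) (Classical.propDecidable _) (trajProb Mex p 0 τ) 0)
        = trajProb Mex p 0 τ * Wal (τ.1 0) (τ.1 1) (τ.1 2) (τ.1 3) := by
    intro τ
    have hiff : (∃ t, τ.1 t ∈ Mex.Xa) ↔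
        (τ.1 0 = 2 ∨ τ.1 1 = 2 ∨ τ.1 2 = 2 ∨ τ.1 3 = 2) := exists_fin4 τ.1 2
    unfold Wal
    by_cases h : (τ.1 0 = 2 ∨ τ.1 1 = 2 ∨ τ.1 2 = 2 ∨ τ.1 3 = 2)
    · rw [if_pos (hiff.mpr h), if_pos h, mul_one]
    · rw [if_neg (fun hx => h (hiff.mp hx)), if_neg h, mul_zero]
  calc probEvent Mex p 0 (fun τ => ∃ t, τ.1 t ∈ Mex.Xa)
      = ∑ τ : Traj Mex, trajProb Mex p 0 τ * Wal (τ.1 0) (τ.1 1) (τ.1 2) (τ.1 3) :=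
        Finset.sum_congr rfl fun τ _ => key τ
    _ = _ := master p Wal
    _ = 3/8 * Q p 1 + 1/4 * (R p 2 + Q p 2) := by
        simp only [Wal_133, Wal_134, Wal_132, Wal_233, Wal_234, Wal_232, Q, R,
          Fin.sum_univ_two]
        ring

/-- Reward weight. -/
def Wr : Fin 5 → Fin 5 → Fin 5 → Fin 5 → ℝ := fun _ _ _ c3 => Mex.rT c3

lemma J_eq (p : HistPolicy Mex) :
    J Mex p 0 = 3/4 * (R p 1 + 5 * Q p 1) + 1/4 * (R p 2 + 5 * Q p 2) := by
  have key : ∀ τ : Traj Mex,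
      trajProb Mex p 0 τ *
          (∑ t : Fin Mex.T, Mex.r t (τ.1 t.castSucc) (τ.2 t) + Mex.rT (τ.1 (Fin.last Mex.T)))
        = trajProb Mex p 0 τ * Wr (τ.1 0) (τ.1 1) (τ.1 2) (τ.1 3) := by
    intro τ
    have hz : (∑ t : Fin Mex.T, Mex.r t (τ.1 t.castSucc) (τ.2 t)) = 0 := by
      simp [show ∀ t x a, Mex.r t x a = (0:ℝ) from fun _ _ _ => rfl]
    rw [hz, zero_add]
    rfl
  calc J Mex p 0
      = ∑ τ : Traj Mex, trajProb Mex p 0 τ * Wr (τ.1 0) (τ.1 1) (τ.1 2) (τ.1 3) :=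
        Finset.sum_congr rfl fun τ _ => key τ
    _ = _ := master p Wr
    _ = 3/4 * (R p 1 + 5 * Q p 1) + 1/4 * (R p 2 + 5 * Q p 2) := by
        simp only [show Wr 0 1 3 3 = 1 from rfl, show Wr 0 1 3 4 = 10 from rfl,
          show Wr 0 1 3 2 = 0 from rfl, show Wr 0 2 3 3 = 1 from rfl,
          show Wr 0 2 3 4 = 10 from rfl, show Wr 0 2 3 2 = 0 from rfl, Q, R,
          Fin.sum_univ_two]
        ring

lemma Q_markov (p : HistPolicy Mex) (hM : IsMarkov p) (x : Fin 5) :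
    Q p x = p.π (2:Fin 3) ![0,1,3] ![0,0] 1 := by
  have hc : ∀ (b0 b1 : Fin 2),
      p.π (2:Fin 3) ![0,x,3] ![b0,b1] = p.π (2:Fin 3) ![0,1,3] ![0,0] :=
    fun b0 b1 => hM (2:Fin 3) _ _ _ _ rfl
  simp only [Q, hc, Fin.sum_univ_two, hA1, hB1]
  ring

end MEx
namespace MEx

/-- The optimal Markov policy: risky with probability 2/3 at time 2. -/
def polPiM : (t : Fin Mex.T) → (Fin (t.val+1) → Fin 5) → (Fin t.val → Fin 2) → Fin 2 → ℝ :=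
  fun t _ _ a => if t.val = 2 then (if a = 1 then 2/3 else 1/3) else (if a = 0 then 1 else 0)

def polM : HistPolicy Mex where
  π := polPiM
  nonneg := by intro t xs as a; unfold polPiM; split_ifs <;> norm_num
  sum_one := by
    intro t xs as
    rw [Fin.sum_univ_two]
    unfold polPiM
    by_cases ht : t.val = 2 <;> simp [ht] <;> norm_num [Fin.ext_iff]

lemma polM_markov : IsMarkov polM := by
  intro t xs xs' as as' _
  rfl

lemma polM_Q (x : Fin 5) : Q polM x = 2/3 := by
  simp only [Q, polM, polPiM, Fin.sum_univ_two]
  norm_num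

lemma polM_R (x : Fin 5) : R polM x = 1/3 := by
  have h := RQ_sum polM x
  rw [polM_Q] at h; linarith

/-- The optimal history-dependent policy: risky w.p. 2/3 at time 2 if the time-1
state was safe, and w.p. 1 if it was the alarm state. -/
def polPiH : (t : Fin Mex.T) → (Fin (t.val+1) → Fin 5) → (Fin t.val → Fin 2) → Fin 2 → ℝ :=
  fun t xs _ a =>
    if h : t.val = 2 then
      (if xs ⟨1, by omega⟩ = 2 then (if a = 1 then 1 else 0) else (if a = 1 then 2/3 else 1/3))
    else (if a = 0 then 1 else 0)

def polH : HistPolicy Mex where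
  π := polPiH
  nonneg := by intro t xs as a; unfold polPiH; split_ifs <;> norm_num
  sum_one := by
    intro t xs as
    rw [Fin.sum_univ_two]
    unfold polPiH
    by_cases ht : t.val = 2
    · simp only [dif_pos ht]
      split_ifs <;> simp_all [Fin.ext_iff] <;> norm_num
    · simp only [dif_neg ht]
      split_ifs <;> simp_all [Fin.ext_iff] <;> norm_num

lemma polH_Q1 : Q polH 1 = 2/3 := by
  simp only [Q, polH, polPiH, Fin.sum_univ_two]
  norm_num [show ¬(1:Fin 5) = 2 from by decide]

lemma polH_Q2 : Q polH 2 = 1 := by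
  simp only [Q, polH, polPiH, Fin.sum_univ_two]
  norm_num

lemma polH_R1 : R polH 1 = 1/3 := by
  have h := RQ_sum polH 1; rw [polH_Q1] at h; linarith

lemma polH_R2 : R polH 2 = 0 := by
  have h := RQ_sum polH 2; rw [polH_Q2] at h; linarith

end MEx

namespace MEx

lemma polM_constraint :
    probEvent Mex polM 0 (fun τ => ∃ t, τ.1 t ∈ Mex.Xa) ≤ 1/2 := by
  rw [probEvent_eq, polM_Q, polM_Q, polM_R]; norm_num

lemma polM_J : J Mex polM 0 = 11/3 := by
  rw [J_eq, polM_Q, polM_Q, polM_R, polM_R]; norm_num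

lemma polH_constraint :
    probEvent Mex polH 0 (fun τ => ∃ t, τ.1 t ∈ Mex.Xa) ≤ 1/2 := by
  rw [probEvent_eq, polH_Q1, polH_Q2, polH_R2]; norm_num

lemma polH_J : J Mex polH 0 = 4 := by
  rw [J_eq, polH_Q1, polH_Q2, polH_R1, polH_R2]; norm_num

lemma hist_ub (p : HistPolicy Mex)
    (hcon : probEvent Mex p 0 (fun τ => ∃ t, τ.1 t ∈ Mex.Xa) ≤ 1/2) :
    J Mex p 0 ≤ 4 := by
  rw [probEvent_eq] at hcon
  rw [J_eq]
  have h1 := RQ_sum p 1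
  have h2 := RQ_sum p 2
  have h3 := R_nonneg p 2
  have h4 := R_nonneg p 1
  have h5 := Q_nonneg p 1
  linarith

lemma markov_ub (p : HistPolicy Mex) (hM : IsMarkov p)
    (hcon : probEvent Mex p 0 (fun τ => ∃ t, τ.1 t ∈ Mex.Xa) ≤ 1/2) :
    J Mex p 0 ≤ 11/3 := by
  rw [probEvent_eq, Q_markov p hM 1, Q_markov p hM 2] at hcon
  rw [J_eq, Q_markov p hM 1, Q_markov p hM 2]
  have h1 := RQ_sum p 1
  have h2 := RQ_sum p 2
  rw [Q_markov p hM 1] at h1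
  rw [Q_markov p hM 2] at h2
  have h3 := R_nonneg p 2
  linarith

end MEx


/-- There is a finite MDP with alarm region, horizon `T = 3`,
a non-alarming initial state and `Δ = 1/2` for which the optimal value over
Markov policies under the joint chance constraint is `11/3` while the optimal
value over history-dependent policies is `4`. -/
theorem markov_strictly_suboptimal_example :
    ∃ (n m : ℕ) (_ : 0 < n) (_ : 0 < m) (M : MDP (Fin n) (Fin m)) (x0 : Fin n),
      M.T = 3 ∧ x0 ∉ M.Xa ∧
      sSup {v : ℝ | ∃ p : HistPolicy M, IsMarkov p ∧
          probEvent M p x0 (fun τ => ∃ t, τ.1 t ∈ M.Xa) ≤ 1 / 2 ∧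
          v = J M p x0} = 11 / 3 ∧
      sSup {v : ℝ | ∃ p : HistPolicy M,
          probEvent M p x0 (fun τ => ∃ t, τ.1 t ∈ M.Xa) ≤ 1 / 2 ∧
          v = J M p x0} = 4 := by
  refine ⟨5, 2, by norm_num, by norm_num, MEx.Mex, 0, rfl, ?_, ?_, ?_⟩
  · intro h
    have h' : (0 : Fin 5) = 2 := h
    exact absurd h' (by decide)
  · apply le_antisymm
    · apply csSup_le
      · exact ⟨11/3, MEx.polM, MEx.polM_markov, MEx.polM_constraint, MEx.polM_J.symm⟩
      · rintro v ⟨p, hM, hcon, rfl⟩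
        exact MEx.markov_ub p hM hcon
    · apply le_csSup
      · exact ⟨11/3, fun v hv => by
          obtain ⟨p, hM, hcon, rfl⟩ := hv
          exact MEx.markov_ub p hM hcon⟩
      · exact ⟨MEx.polM, MEx.polM_markov, MEx.polM_constraint, MEx.polM_J.symm⟩
  · apply le_antisymm
    · apply csSup_le
      · exact ⟨4, MEx.polH, MEx.polH_constraint, MEx.polH_J.symm⟩
      · rintro v ⟨p, hcon, rfl⟩
        exact MEx.hist_ub p hcon
    · apply le_csSup
      · exact ⟨4, fun v hv => by
          obtain ⟨p, hcon, rfl⟩ := hv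
          exact MEx.hist_ub p hcon⟩
      · exact ⟨MEx.polH, MEx.polH_constraint, MEx.polH_J.symm⟩

end
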